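/- Let Y be a real random variable distributed as the Gaussian N(μ, σ²) with σ > 0, and let y* ∈ ℝ. Then the expected improvement E[(y* − Y)⁺] = (y* − μ)·Φ((y* − μ)/σ) + σ·φ((y* − μ)/σ), where φ(t) = exp(−t²/2)/√(2π) is the standard normal density and Φ(t) = ∫_{−∞}^t φ(u) du is the standard normal cumulative distribution function, and (a)⁺ = max(a, 0). -/

import Mathlib

open MeasureTheory ProbabilityTheory

/-- The standard normal density `φ(t) = exp(−t²/2)/√(2π)`. -/
noncomputable def stdNormalPDF (t : ℝ) : ℝ :=
  Real.exp (-t ^ 2 / 2) / Real.sqrt (2 * Real.pi)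

/-- The standard normal cumulative distribution function
`Φ(t) = ∫_{−∞}^t φ(u) du`. -/
noncomputable def stdNormalCDF (t : ℝ) : ℝ :=
  ∫ u in Set.Iic t, stdNormalPDF u

lemma stdNormalPDF_nonneg (t : ℝ) : 0 ≤ stdNormalPDF t := by
  unfold stdNormalPDF; positivity

lemma gaussianPDFReal_zero_one (x : ℝ) : gaussianPDFReal 0 1 x = stdNormalPDF x := by
  unfold gaussianPDFReal stdNormalPDF
  rw [Real.sqrt_mul (by norm_num : (0:ℝ) ≤ 2), div_eq_mul_inv, mul_inv]
  norm_num
  ring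

lemma stdNormalPDF_integrable : Integrable stdNormalPDF := by
  have := integrable_gaussianPDFReal 0 1
  exact this.congr (Filter.Eventually.of_forall fun x => gaussianPDF_real_eq x)
where gaussianPDF_real_eq := gaussianPDFReal_zero_one

lemma id_mul_stdNormalPDF_integrable : Integrable (fun x : ℝ => x * stdNormalPDF x) := by
  have h : (fun x : ℝ => x * stdNormalPDF x)
      = fun x : ℝ => (x * Real.exp (-(1/2) * x ^ 2)) * (Real.sqrt (2 * Real.pi))⁻¹ := by
    ext x
    unfold stdNormalPDF
    rw [div_eq_mul_inv]
    ring_nf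
  rw [h]
  exact (integrable_mul_exp_neg_mul_sq (by norm_num : (0:ℝ) < 1/2)).mul_const _

lemma hasDerivAt_neg_stdNormalPDF (x : ℝ) :
    HasDerivAt (fun y => -stdNormalPDF y) (x * stdNormalPDF x) x := by
  unfold stdNormalPDF
  have h1 : HasDerivAt (fun y : ℝ => -y ^ 2 / 2) (-x) x := by
    have := ((hasDerivAt_pow 2 x).neg).div_const 2
    exact this.congr_deriv (by norm_num; ring)
  have h2 : HasDerivAt (fun y : ℝ => Real.exp (-y ^ 2 / 2)) (Real.exp (-x ^ 2 / 2) * (-x)) x :=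
    h1.exp
  have := (h2.div_const (Real.sqrt (2 * Real.pi))).neg
  exact this.congr_deriv (by ring)

lemma stdNormalPDF_tendsto_atBot :
    Filter.Tendsto (fun x => -stdNormalPDF x) Filter.atBot (nhds 0) := by
  have h1 : Filter.Tendsto (fun x : ℝ => -x ^ 2 / 2) Filter.atBot Filter.atBot := by
    apply Filter.Tendsto.atBot_div_const (by norm_num)
    have h0 : Filter.Tendsto (fun x : ℝ => x ^ 2) Filter.atBot Filter.atTop := by
      have := (Filter.tendsto_pow_atTop (two_ne_zero)).comp
        (Filter.tendsto_neg_atBot_atTop (G := ℝ))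
      exact this.congr (fun x => by simp)
    exact (Filter.tendsto_neg_atTop_atBot.comp h0).congr (fun x => rfl)
  have h2 : Filter.Tendsto (fun x : ℝ => Real.exp (-x ^ 2 / 2)) Filter.atBot (nhds 0) :=
    Real.tendsto_exp_atBot.comp h1
  have h3 := (h2.div_const (Real.sqrt (2 * Real.pi))).neg
  simp only [zero_div, neg_zero] at h3
  unfold stdNormalPDF
  exact h3

lemma integral_Iic_id_mul_stdNormalPDF (t : ℝ) :
    ∫ x in Set.Iic t, x * stdNormalPDF x = -stdNormalPDF t := by
  have := integral_Iic_of_hasDerivAt_of_tendsto' (a := t) (m := 0)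
    (f := fun y => -stdNormalPDF y) (f' := fun x => x * stdNormalPDF x)
    (fun x _ => hasDerivAt_neg_stdNormalPDF x)
    (id_mul_stdNormalPDF_integrable.integrableOn)
    stdNormalPDF_tendsto_atBot
  simpa using this

/-- Core computation for the standard normal. -/
lemma key (t : ℝ) :
    ∫ z, max (t - z) 0 ∂(gaussianReal 0 1) = t * stdNormalCDF t + stdNormalPDF t := by
  have hv : (1 : NNReal) ≠ 0 := one_ne_zero
  rw [gaussianReal_of_var_ne_zero _ hv]
  have hpdf : gaussianPDF 0 1 = fun x => ((gaussianPDFReal 0 1 x).toNNReal : ENNReal) := by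
    ext x; rfl
  rw [hpdf, integral_withDensity_eq_integral_smul
    ((measurable_gaussianPDFReal 0 1).real_toNNReal) _]
  have heq : (fun x => (gaussianPDFReal 0 1 x).toNNReal • max (t - x) 0)
      = Set.indicator (Set.Iic t) (fun x => t * stdNormalPDF x - x * stdNormalPDF x) := by
    ext x
    rw [NNReal.smul_def, Real.coe_toNNReal _ (gaussianPDFReal_nonneg 0 1 x),
      gaussianPDFReal_zero_one, smul_eq_mul]
    by_cases hx : x ≤ t
    · rw [Set.indicator_of_mem (show x ∈ Set.Iic t from hx)]
      rw [max_eq_left (by linarith)]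
      ring
    · rw [Set.indicator_of_notMem (show x ∉ Set.Iic t from hx)]
      rw [max_eq_right (by push_neg at hx; linarith)]
      ring
  rw [heq, integral_indicator measurableSet_Iic]
  rw [integral_sub ((stdNormalPDF_integrable.const_mul t).integrableOn)
    (id_mul_stdNormalPDF_integrable.integrableOn)]
  rw [integral_const_mul, integral_Iic_id_mul_stdNormalPDF]
  unfold stdNormalCDF
  ring

/-- **Closed form of expected improvement.** If `Y ~ N(μ, σ²)` with `σ > 0`
and `y* ∈ ℝ`, then
`E[(y* − Y)⁺] = (y* − μ)·Φ((y* − μ)/σ) + σ·φ((y* − μ)/σ)`. -/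
theorem expected_improvement_closed_form
    (μ σ ystar : ℝ) (hσ : 0 < σ) :
    ∫ y, max (ystar - y) 0 ∂(gaussianReal μ (σ ^ 2).toNNReal) =
      (ystar - μ) * stdNormalCDF ((ystar - μ) / σ)
        + σ * stdNormalPDF ((ystar - μ) / σ) := by
  have hσ' : σ ≠ 0 := ne_of_gt hσ
  have hmap : gaussianReal μ (σ ^ 2).toNNReal
      = (gaussianReal 0 1).map (fun z => σ * z + μ) := by
    have h1 : (fun z : ℝ => σ * z + μ) = (fun z : ℝ => z + μ) ∘ (fun z : ℝ => σ * z) := rfl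
    rw [h1, ← Measure.map_map (measurable_add_const μ) (measurable_const_mul σ)]
    rw [gaussianReal_map_const_mul σ, gaussianReal_map_add_const μ]
    congr 1
    · ring
    · refine NNReal.coe_injective ?_
      simp [Real.coe_toNNReal _ (sq_nonneg σ)]
  have hg : Measurable (fun z : ℝ => σ * z + μ) := by fun_prop
  have hmeas : AEStronglyMeasurable (fun y : ℝ => max (ystar - y) 0)
      ((gaussianReal 0 1).map (fun z => σ * z + μ)) := by
    apply Continuous.aestronglyMeasurable
    fun_prop
  rw [hmap, integral_map hg.aemeasurable hmeas]
  set t := (ystar - μ) / σ with ht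
  have heq : ∀ z : ℝ, max (ystar - (σ * z + μ)) 0 = σ * max (t - z) 0 := by
    intro z
    rw [mul_max_of_nonneg _ _ (le_of_lt hσ), mul_zero]
    congr 1
    rw [ht]
    field_simp
    ring
  simp_rw [heq]
  rw [integral_const_mul, key t]
  have : σ * t = ystar - μ := by rw [ht]; field_simp
  rw [mul_add, ← mul_assoc, this]
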